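/- Let f_s, f_r, k_r, g_p, k_l be positive reals, μ ≥ 0, 0 < q < 1, and m1, m2 real. Define D := (g_p + k_r + f_s(k_l − m1))² + 4 f_s((g_p + k_r)m1 − g_p k_l), b_s^e := (√D − g_p − k_r + f_s(m1 − k_l))/(2 f_s) and b_p^e := k_l(√D − g_p − k_r + f_s(m1 − k_l))/(√D + g_p + k_r + f_s(m1 − k_l)). Then (b_s^e, b_p^e, 0) is an equilibrium of the frozen autonomous system, i.e. F(b_s^e, b_p^e, 0) = (0,0,0). -/

import Mathlib

/-- The frozen autonomous vector field `F(b_s, b_p, b_r)` of the biofilm model. -/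
noncomputable def frozenF (f_s f_r k_r g_p k_l μ q m1 m2 : ℝ) (b : ℝ × ℝ × ℝ) :
    ℝ × ℝ × ℝ :=
  ((m1 - k_l - b.1) * f_s * b.1 + k_r * b.2.1 - (μ + f_r) * b.2.2 * b.1 + q * f_r * b.2.2,
   (k_l - b.2.1) * f_s * b.1 - (k_r + g_p) * b.2.1 - f_r * b.2.2 * b.2.1,
   (m2 - q - b.2.2) * f_r * b.2.2 + (μ - f_r) * b.2.2 * b.1)

/-- `(b_s^e, b_p^e, 0)` is an equilibrium of the frozen autonomous system. -/
theorem stmt_1 (f_s f_r k_r g_p k_l μ q m1 m2 : ℝ)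
    (hfs : 0 < f_s) (hfr : 0 < f_r) (hkr : 0 < k_r) (hgp : 0 < g_p) (hkl : 0 < k_l)
    (hμ : 0 ≤ μ) (hq0 : 0 < q) (hq1 : q < 1) :
    let D := (g_p + k_r + f_s * (k_l - m1)) ^ 2 + 4 * f_s * ((g_p + k_r) * m1 - g_p * k_l)
    let bse := (Real.sqrt D - g_p - k_r + f_s * (m1 - k_l)) / (2 * f_s)
    let bpe := k_l * (Real.sqrt D - g_p - k_r + f_s * (m1 - k_l)) /
        (Real.sqrt D + g_p + k_r + f_s * (m1 - k_l))
    frozenF f_s f_r k_r g_p k_l μ q m1 m2 (bse, bpe, 0) = (0, 0, 0) := by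
  intro D bse bpe
  have hD' : D = (f_s * (k_l - m1) - g_p - k_r) ^ 2 + 4 * f_s * k_l * k_r := by
    simp only [D]; ring
  have hDpos : 0 < D := by rw [hD']; positivity
  have hs2 : Real.sqrt D ^ 2 =
      (g_p + k_r + f_s * (k_l - m1)) ^ 2 + 4 * f_s * ((g_p + k_r) * m1 - g_p * k_l) :=
    Real.sq_sqrt hDpos.le
  have hsnn : 0 ≤ Real.sqrt D := Real.sqrt_nonneg _
  have habs : (f_s * (k_l - m1) - g_p - k_r) ^ 2 < Real.sqrt D ^ 2 := by
    rw [hs2]; nlinarith [mul_pos (mul_pos hfs hkl) hkr]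
  have hden : 0 < Real.sqrt D + g_p + k_r + f_s * (m1 - k_l) := by nlinarith
  have hden' : Real.sqrt D + g_p + k_r + f_s * (m1 - k_l) ≠ 0 := ne_of_gt hden
  have hfs' : f_s ≠ 0 := ne_of_gt hfs
  simp only [frozenF, bse, bpe, Prod.mk.injEq]
  refine ⟨?_, ?_, by ring⟩
  · have hden'' : Real.sqrt D + g_p + k_r + (m1 - k_l) * f_s ≠ 0 := by rwa [mul_comm] at hden'
    field_simp
    linear_combination (-(Real.sqrt D + f_s * (m1 - k_l) - g_p - k_r)) * hs2
  · field_simp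
    ring
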